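/- arXiv:1206.4177 — 2 statements merged into one kernel-verified Lean document; each statement's English description precedes it below -/
import Mathlib

section
/- Every left derivation δ of a semiprime Γ-ring M maps M into its center Z(M); that is, δ(a) ∈ Z(M) for all a ∈ M. -/
/-- A Γ-ring in the sense of Barnes: additive abelian groups `M` and `Γ` with a
triadditive, associative product `M × Γ × M → M`. -/
structure GammaRing (M : Type*) (Γ : Type*) [AddCommGroup M] [AddCommGroup Γ] where
  tri : M → Γ → M → M
  add_left : ∀ (a b : M) (α : Γ) (c : M), tri (a + b) α c = tri a α c + tri b α c
  add_mid : ∀ (a : M) (α β : Γ) (b : M), tri a (α + β) b = tri a α b + tri a β b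
  add_right : ∀ (a : M) (α : Γ) (b c : M), tri a α (b + c) = tri a α b + tri a α c
  assoc : ∀ (a : M) (α : Γ) (b : M) (β : Γ) (c : M),
    tri (tri a α b) β c = tri a α (tri b β c)

namespace GammaRing

variable {M Γ : Type*} [AddCommGroup M] [AddCommGroup Γ]

/-- The commutator `[a,b]_α = aαb - bαa`. -/
def comm (G : GammaRing M Γ) (a : M) (α : Γ) (b : M) : M :=
  G.tri a α b - G.tri b α a

/-- The center `Z(M)`. -/
def center (G : GammaRing M Γ) : Set M :=
  {a | ∀ (b : M) (α : Γ), G.tri a α b = G.tri b α a}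

/-- A left derivation: additive with `δ(xαy) = xαδ(y) + yαδ(x)`. -/
def IsLeftDerivation (G : GammaRing M Γ) (δ : M → M) : Prop :=
  (∀ x y : M, δ (x + y) = δ x + δ y) ∧
  ∀ (x : M) (α : Γ) (y : M), δ (G.tri x α y) = G.tri x α (δ y) + G.tri y α (δ x)

/-- A derivation: additive with `μ(xαy) = μ(x)αy + xαμ(y)`. -/
def IsDerivation (G : GammaRing M Γ) (μ : M → M) : Prop :=
  (∀ x y : M, μ (x + y) = μ x + μ y) ∧
  ∀ (x : M) (α : Γ) (y : M), μ (G.tri x α y) = G.tri (μ x) α y + G.tri x α (μ y)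

/-- An endomorphism: additive with `σ(xαy) = σ(x)ασ(y)`. -/
def IsEndomorphism (G : GammaRing M Γ) (σ : M → M) : Prop :=
  (∀ x y : M, σ (x + y) = σ x + σ y) ∧
  ∀ (x : M) (α : Γ) (y : M), σ (G.tri x α y) = G.tri (σ x) α (σ y)

/-- Semiprime: `aΓMΓa = 0` implies `a = 0`. -/
def IsSemiprime (G : GammaRing M Γ) : Prop :=
  ∀ a : M, (∀ (α : Γ) (m : M) (β : Γ), G.tri (G.tri a α m) β a = 0) → a = 0

/-- Prime: `aΓMΓb = 0` implies `a = 0` or `b = 0`. -/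
def IsPrime (G : GammaRing M Γ) : Prop :=
  ∀ a b : M, (∀ (α : Γ) (m : M) (β : Γ), G.tri (G.tri a α m) β b = 0) → a = 0 ∨ b = 0

/-- Strong commutativity preserving: `[f(x),f(y)]_α = [x,y]_α`. -/
def IsSCP (G : GammaRing M Γ) (f : M → M) : Prop :=
  ∀ (x : M) (α : Γ) (y : M), G.comm (f x) α (f y) = G.comm x α y

end GammaRing


section AuxLemmas

variable {M Γ : Type*} [AddCommGroup M] [AddCommGroup Γ]

lemma GRD_zero_left (G : GammaRing M Γ) (α : Γ) (c : M) : G.tri 0 α c = 0 := by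
  have h := G.add_left 0 0 α c
  rw [add_zero] at h
  exact right_eq_add.mp h

lemma GRD_zero_right (G : GammaRing M Γ) (a : M) (α : Γ) : G.tri a α 0 = 0 := by
  have h := G.add_right a α 0 0
  rw [add_zero] at h
  exact right_eq_add.mp h

lemma GRD_sub_left (G : GammaRing M Γ) (a b : M) (α : Γ) (c : M) :
    G.tri (a - b) α c = G.tri a α c - G.tri b α c := by
  have h := G.add_left (a - b) b α c
  rw [sub_add_cancel] at h
  exact eq_sub_of_add_eq h.symm

lemma GRD_sub_right (G : GammaRing M Γ) (a : M) (α : Γ) (b c : M) :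
    G.tri a α (b - c) = G.tri a α b - G.tri a α c := by
  have h := G.add_right a α (b - c) c
  rw [sub_add_cancel] at h
  exact eq_sub_of_add_eq h.symm

lemma GRD_neg_left (G : GammaRing M Γ) (a : M) (α : Γ) (c : M) :
    G.tri (-a) α c = -(G.tri a α c) := by
  have h := GRD_sub_left G 0 a α c
  rw [zero_sub, GRD_zero_left, zero_sub] at h
  exact h

lemma GRD_neg_right (G : GammaRing M Γ) (a : M) (α : Γ) (c : M) :
    G.tri a α (-c) = -(G.tri a α c) := by
  have h := GRD_sub_right G a α 0 c
  rw [zero_sub, GRD_zero_right, zero_sub] at h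
  exact h

/-- Key lemma "L2": `m ρ x σ δx = x σ m ρ δx`. -/
lemma GRD_l2 (G : GammaRing M Γ) (δ : M → M) (hδ : G.IsLeftDerivation δ)
    (m x : M) (ρ σ : Γ) :
    G.tri m ρ (G.tri x σ (δ x)) = G.tri x σ (G.tri m ρ (δ x)) := by
  have H1 : δ (G.tri m ρ (G.tri x σ x)) =
      G.tri m ρ (G.tri x σ (δ x)) + G.tri m ρ (G.tri x σ (δ x)) +
        G.tri (G.tri x σ x) ρ (δ m) := by
    rw [hδ.2, hδ.2, G.add_right]
  have H2 : δ (G.tri (G.tri m ρ x) σ x) =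
      G.tri (G.tri m ρ x) σ (δ x) +
        (G.tri x σ (G.tri m ρ (δ x)) + G.tri x σ (G.tri x ρ (δ m))) := by
    rw [hδ.2, hδ.2, G.add_right]
  have H3 : δ (G.tri (G.tri m ρ x) σ x) = δ (G.tri m ρ (G.tri x σ x)) :=
    congrArg δ (G.assoc m ρ x σ x)
  have E : G.tri m ρ (G.tri x σ (δ x)) + G.tri m ρ (G.tri x σ (δ x)) +
      G.tri (G.tri x σ x) ρ (δ m) =
      G.tri (G.tri m ρ x) σ (δ x) +
        (G.tri x σ (G.tri m ρ (δ x)) + G.tri x σ (G.tri x ρ (δ m))) :=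
    H1.symm.trans (H3.symm.trans H2)
  rw [G.assoc x σ x ρ (δ m), G.assoc m ρ x σ (δ x)] at E
  have E' : G.tri m ρ (G.tri x σ (δ x)) +
      (G.tri m ρ (G.tri x σ (δ x)) + G.tri x σ (G.tri x ρ (δ m))) =
      G.tri m ρ (G.tri x σ (δ x)) +
      (G.tri x σ (G.tri m ρ (δ x)) + G.tri x σ (G.tri x ρ (δ m))) := by
    rw [← add_assoc]; exact E
  exact add_right_cancel (add_left_cancel E')

/-- Linearized L2 in `x` with partner `y`. -/
lemma GRD_l2L (G : GammaRing M Γ) (δ : M → M) (hδ : G.IsLeftDerivation δ)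
    (m x y : M) (ρ σ : Γ) :
    G.tri m ρ (G.tri x σ (δ y)) + G.tri m ρ (G.tri y σ (δ x)) =
      G.tri x σ (G.tri m ρ (δ y)) + G.tri y σ (G.tri m ρ (δ x)) := by
  have h := GRD_l2 G δ hδ m (x + y) ρ σ
  rw [hδ.1 x y] at h
  rw [G.add_left x y σ (δ x + δ y)] at h
  rw [G.add_right m ρ (G.tri x σ (δ x + δ y)) (G.tri y σ (δ x + δ y))] at h
  rw [G.add_right x σ (δ x) (δ y), G.add_right y σ (δ x) (δ y)] at h
  rw [G.add_right m ρ (G.tri x σ (δ x)) (G.tri x σ (δ y))] at h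
  rw [G.add_right m ρ (G.tri y σ (δ x)) (G.tri y σ (δ y))] at h
  rw [G.add_right m ρ (δ x) (δ y)] at h
  rw [G.add_left x y σ (G.tri m ρ (δ x) + G.tri m ρ (δ y))] at h
  rw [G.add_right x σ (G.tri m ρ (δ x)) (G.tri m ρ (δ y))] at h
  rw [G.add_right y σ (G.tri m ρ (δ x)) (G.tri m ρ (δ y))] at h
  rw [GRD_l2 G δ hδ m x ρ σ, GRD_l2 G δ hδ m y ρ σ] at h
  have h2 : G.tri x σ (G.tri m ρ (δ x)) +
      ((G.tri m ρ (G.tri x σ (δ y)) + G.tri m ρ (G.tri y σ (δ x))) +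
        G.tri y σ (G.tri m ρ (δ y))) =
      G.tri x σ (G.tri m ρ (δ x)) +
      ((G.tri x σ (G.tri m ρ (δ y)) + G.tri y σ (G.tri m ρ (δ x))) +
        G.tri y σ (G.tri m ρ (δ y))) := by
    calc G.tri x σ (G.tri m ρ (δ x)) +
        ((G.tri m ρ (G.tri x σ (δ y)) + G.tri m ρ (G.tri y σ (δ x))) +
          G.tri y σ (G.tri m ρ (δ y))) =
        (G.tri x σ (G.tri m ρ (δ x)) + G.tri m ρ (G.tri x σ (δ y))) +
          (G.tri m ρ (G.tri y σ (δ x)) + G.tri y σ (G.tri m ρ (δ y))) := by abel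
      _ = (G.tri x σ (G.tri m ρ (δ x)) + G.tri x σ (G.tri m ρ (δ y))) +
          (G.tri y σ (G.tri m ρ (δ x)) + G.tri y σ (G.tri m ρ (δ y))) := h
      _ = G.tri x σ (G.tri m ρ (δ x)) +
          ((G.tri x σ (G.tri m ρ (δ y)) + G.tri y σ (G.tri m ρ (δ x))) +
            G.tri y σ (G.tri m ρ (δ y))) := by abel
  exact add_right_cancel (add_left_cancel h2)

/-- Master 3-variable identity. -/
lemma GRD_master (G : GammaRing M Γ) (δ : M → M) (hδ : G.IsLeftDerivation δ)
    (a b z : M) (α β : Γ) :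
    G.tri a α (G.tri z β (δ b)) + G.tri b β (G.tri z α (δ a)) =
      G.tri z β (G.tri a α (δ b)) + G.tri z β (G.tri b α (δ a)) := by
  have H1 : δ (G.tri a α (G.tri b β z)) =
      G.tri a α (G.tri b β (δ z)) + G.tri a α (G.tri z β (δ b)) +
        G.tri (G.tri b β z) α (δ a) := by
    rw [hδ.2, hδ.2, G.add_right]
  have H2 : δ (G.tri (G.tri a α b) β z) =
      G.tri (G.tri a α b) β (δ z) +
        (G.tri z β (G.tri a α (δ b)) + G.tri z β (G.tri b α (δ a))) := by
    rw [hδ.2, hδ.2, G.add_right]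
  have H3 : δ (G.tri (G.tri a α b) β z) = δ (G.tri a α (G.tri b β z)) :=
    congrArg δ (G.assoc a α b β z)
  have E : G.tri a α (G.tri b β (δ z)) + G.tri a α (G.tri z β (δ b)) +
      G.tri (G.tri b β z) α (δ a) =
      G.tri (G.tri a α b) β (δ z) +
        (G.tri z β (G.tri a α (δ b)) + G.tri z β (G.tri b α (δ a))) :=
    H1.symm.trans (H3.symm.trans H2)
  rw [G.assoc b β z α (δ a), G.assoc a α b β (δ z)] at E
  have E' : G.tri a α (G.tri b β (δ z)) +
      (G.tri a α (G.tri z β (δ b)) + G.tri b β (G.tri z α (δ a))) =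
      G.tri a α (G.tri b β (δ z)) +
      (G.tri z β (G.tri a α (δ b)) + G.tri z β (G.tri b α (δ a))) := by
    rw [← add_assoc]; exact E
  exact add_left_cancel E'

/-- The key four-variable identity: `u γ x ρ v σ δx = x γ u ρ v σ δx`. -/
lemma GRD_T2 (G : GammaRing M Γ) (δ : M → M) (hδ : G.IsLeftDerivation δ)
    (u x v : M) (γ ρ σ : Γ) :
    G.tri u γ (G.tri x ρ (G.tri v σ (δ x))) =
      G.tri x γ (G.tri u ρ (G.tri v σ (δ x))) := by
  have h1' : G.tri u γ (G.tri v σ (G.tri x ρ (δ x))) =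
      G.tri u γ (G.tri x ρ (G.tri v σ (δ x))) := by
    rw [GRD_l2 G δ hδ v x σ ρ]
  have h2 := GRD_master G δ hδ x u (G.tri v σ x) ρ γ
  rw [G.assoc v σ x γ (δ u), G.assoc v σ x ρ (δ x),
    G.assoc v σ x γ (G.tri x ρ (δ u)), G.assoc v σ x γ (G.tri u ρ (δ x))] at h2
  have h3 := GRD_l2L G δ hδ (G.tri v σ x) x u γ ρ
  rw [G.assoc v σ x γ (G.tri x ρ (δ u)), G.assoc v σ x γ (G.tri u ρ (δ x)),
    G.assoc v σ x γ (δ u), G.assoc v σ x γ (δ x)] at h3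
  have E := h2.trans h3
  have h4 := GRD_l2 G δ hδ (G.tri u ρ v) x σ γ
  rw [G.assoc u ρ v σ (G.tri x γ (δ x)), G.assoc u ρ v σ (δ x)] at h4
  calc G.tri u γ (G.tri x ρ (G.tri v σ (δ x)))
      = G.tri u γ (G.tri v σ (G.tri x ρ (δ x))) := h1'.symm
    _ = G.tri u ρ (G.tri v σ (G.tri x γ (δ x))) := add_left_cancel E
    _ = G.tri x γ (G.tri u ρ (G.tri v σ (δ x))) := h4

/-- In a semiprime Γ-ring, `aΓMΓb = 0` implies `bΓMΓa = 0`. -/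
lemma GRD_flip (G : GammaRing M Γ) (hsp : G.IsSemiprime) (a b : M)
    (h : ∀ (ρ : Γ) (m : M) (τ : Γ), G.tri (G.tri a ρ m) τ b = 0) :
    ∀ (ρ : Γ) (m : M) (τ : Γ), G.tri (G.tri b ρ m) τ a = 0 := by
  intro ρ m τ
  apply hsp
  intro π n κ
  rw [G.assoc (G.tri b ρ m) τ a π n,
    G.assoc (G.tri b ρ m) τ (G.tri a π n) κ (G.tri (G.tri b ρ m) τ a),
    ← G.assoc (G.tri a π n) κ (G.tri b ρ m) τ a,
    ← G.assoc (G.tri a π n) κ b ρ m,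
    h π n κ, GRD_zero_left, GRD_zero_left, GRD_zero_right]

/-- T5: commutators annihilate every `δ w` through any middle element. -/
lemma GRD_T5 (G : GammaRing M Γ) (hsp : G.IsSemiprime)
    (δ : M → M) (hδ : G.IsLeftDerivation δ)
    (u x w v : M) (γ ρ σ : Γ) :
    G.tri (G.tri (G.tri u γ x - G.tri x γ u) ρ v) σ (δ w) = 0 := by
  have hZ2 : ∀ (x' v' : M) (ρ' σ' : Γ),
      G.tri (G.tri (G.tri u γ x' - G.tri x' γ u) ρ' v') σ' (δ x') = 0 := by
    intro x' v' ρ' σ'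
    rw [GRD_sub_left G (G.tri u γ x') (G.tri x' γ u) ρ' v',
      GRD_sub_left G (G.tri (G.tri u γ x') ρ' v') (G.tri (G.tri x' γ u) ρ' v') σ' (δ x'),
      G.assoc u γ x' ρ' v', G.assoc u γ (G.tri x' ρ' v') σ' (δ x'),
      G.assoc x' γ u ρ' v', G.assoc x' γ (G.tri u ρ' v') σ' (δ x'),
      G.assoc x' ρ' v' σ' (δ x'), G.assoc u ρ' v' σ' (δ x'),
      GRD_T2 G δ hδ u x' v' γ ρ' σ', sub_self]
  have hflip : ∀ (x' : M) (ρ' : Γ) (m : M) (τ' : Γ),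
      G.tri (G.tri (δ x') ρ' m) τ' (G.tri u γ x' - G.tri x' γ u) = 0 := by
    intro x'
    exact GRD_flip G hsp (G.tri u γ x' - G.tri x' γ u) (δ x')
      (fun ρ' m τ' => hZ2 x' m ρ' τ')
  have E := hZ2 (x + w) v ρ σ
  rw [G.add_right u γ x w, G.add_left x w γ u, hδ.1 x w] at E
  rw [show G.tri u γ x + G.tri u γ w - (G.tri x γ u + G.tri w γ u) =
      (G.tri u γ x - G.tri x γ u) + (G.tri u γ w - G.tri w γ u) from by abel] at E
  rw [G.add_left (G.tri u γ x - G.tri x γ u) (G.tri u γ w - G.tri w γ u) ρ v] at E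
  rw [G.add_left (G.tri (G.tri u γ x - G.tri x γ u) ρ v)
      (G.tri (G.tri u γ w - G.tri w γ u) ρ v) σ (δ x + δ w)] at E
  rw [G.add_right (G.tri (G.tri u γ x - G.tri x γ u) ρ v) σ (δ x) (δ w)] at E
  rw [G.add_right (G.tri (G.tri u γ w - G.tri w γ u) ρ v) σ (δ x) (δ w)] at E
  rw [hZ2 x v ρ σ, hZ2 w v ρ σ, zero_add, add_zero] at E
  have hneg : G.tri (G.tri (G.tri u γ x - G.tri x γ u) ρ v) σ (δ w) =
      -(G.tri (G.tri (G.tri u γ w - G.tri w γ u) ρ v) σ (δ x)) :=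
    eq_neg_of_add_eq_zero_left E
  apply hsp
  intro π n κ
  nth_rewrite 1 [hneg]
  rw [GRD_neg_left, GRD_neg_left, neg_eq_zero]
  rw [G.assoc (G.tri (G.tri u γ w - G.tri w γ u) ρ v) σ (δ x) π n]
  rw [G.assoc (G.tri (G.tri u γ w - G.tri w γ u) ρ v) σ (G.tri (δ x) π n) κ
      (G.tri (G.tri (G.tri u γ x - G.tri x γ u) ρ v) σ (δ w))]
  rw [← G.assoc (G.tri (δ x) π n) κ (G.tri (G.tri u γ x - G.tri x γ u) ρ v) σ (δ w)]
  rw [← G.assoc (G.tri (δ x) π n) κ (G.tri u γ x - G.tri x γ u) ρ v]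
  rw [hflip x π n κ, GRD_zero_left, GRD_zero_left, GRD_zero_right]

end AuxLemmas

/-- A left derivation of a semiprime Γ-ring maps into the center. -/
theorem semiprime_left_derivation_maps_to_center {M Γ : Type*}
    [AddCommGroup M] [AddCommGroup Γ] (G : GammaRing M Γ) (hsp : G.IsSemiprime)
    (δ : M → M) (hδ : G.IsLeftDerivation δ) :
    ∀ a : M, δ a ∈ G.center := by
  intro a
  simp only [GammaRing.center, Set.mem_setOf_eq]
  intro b α
  rw [← sub_eq_zero]
  apply hsp
  intro ρ n τ
  rw [GRD_sub_right G (G.tri (G.tri (δ a) α b - G.tri b α (δ a)) ρ n) τ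
      (G.tri (δ a) α b) (G.tri b α (δ a))]
  rw [← G.assoc (G.tri (G.tri (δ a) α b - G.tri b α (δ a)) ρ n) τ (δ a) α b]
  rw [GRD_T5 G hsp δ hδ (δ a) b a n α ρ τ, GRD_zero_left]
  rw [← G.assoc (G.tri (G.tri (δ a) α b - G.tri b α (δ a)) ρ n) τ b α (δ a)]
  rw [G.assoc (G.tri (δ a) α b - G.tri b α (δ a)) ρ n τ b]
  rw [GRD_T5 G hsp δ hδ (δ a) b a (G.tri n τ b) α ρ α]
  rw [sub_self]
end

section
/- Let M be a semiprime Γ-ring and σ: M → M a strong commutativity preserving endomorphism. Then (σ(x) − x) α (yβzγt − yγtβz) = 0 for all x, y, z, t ∈ M and α, β, γ ∈ Γ. -/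
namespace GammaRing

variable {M Γ : Type*} [AddCommGroup M] [AddCommGroup Γ] (G : GammaRing M Γ)

theorem tri_zero_left (α : Γ) (c : M) : G.tri 0 α c = 0 := by
  have h := G.add_left 0 0 α c
  rw [add_zero] at h
  exact left_eq_add.mp h

theorem tri_sub_left (a b : M) (α : Γ) (c : M) :
    G.tri (a - b) α c = G.tri a α c - G.tri b α c := by
  have h := G.add_left (a - b) b α c
  rw [show a - b + b = a from by abel] at h
  exact eq_sub_of_add_eq h.symm

theorem tri_zero_right (a : M) (α : Γ) : G.tri a α 0 = 0 := by
  have h := G.add_right a α 0 0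
  rw [add_zero] at h
  exact left_eq_add.mp h

theorem tri_sub_right (a : M) (α : Γ) (b c : M) :
    G.tri a α (b - c) = G.tri a α b - G.tri a α c := by
  have h := G.add_right a α (b - c) c
  rw [show b - c + c = b from by abel] at h
  exact eq_sub_of_add_eq h.symm

theorem tri_neg_right (a : M) (α : Γ) (b : M) :
    G.tri a α (-b) = - G.tri a α b := by
  have h := G.tri_sub_right a α 0 b
  rw [zero_sub, G.tri_zero_right, zero_sub] at h
  exact h

end GammaRing

/-- For an scp endomorphism `σ` of a semiprime Γ-ring,
`(σ(x) − x) α (yβzγt − yγtβz) = 0`. -/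
theorem semiprime_scp_endomorphism_identity {M Γ : Type*}
    [AddCommGroup M] [AddCommGroup Γ] (G : GammaRing M Γ) (hsp : G.IsSemiprime)
    (σ : M → M) (hσ : G.IsEndomorphism σ) (hscp : G.IsSCP σ) :
    ∀ (x y z t : M) (α β γ : Γ),
      G.tri (σ x - x) α
        (G.tri y β (G.tri z γ t) - G.tri y γ (G.tri t β z)) = 0 := by
  obtain ⟨hadd, hmul⟩ := hσ
  -- the scp hypothesis, unfolded
  have hs : ∀ (x : M) (α : Γ) (y : M),
      G.tri (σ x) α (σ y) - G.tri (σ y) α (σ x) = G.tri x α y - G.tri y α x :=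
    fun x α y => hscp x α y
  -- Step 1: (σx - x) α [x,y]_α = 0
  have hc : ∀ (x y : M) (α : Γ),
      G.tri (σ x - x) α (G.tri x α y - G.tri y α x) = 0 := by
    intro x y α
    have h := hs x α (G.tri x α y)
    rw [hmul] at h
    simp only [G.assoc] at h
    rw [← G.tri_sub_right, ← G.tri_sub_right, hs x α y] at h
    rw [G.tri_sub_left, h, sub_self]
  -- Step 2 (E1): (σx - x) α (yα(xγt) - yγ(tαx)) = 0
  have hE1 : ∀ (x y t : M) (α γ : Γ),
      G.tri (σ x - x) α (G.tri y α (G.tri x γ t) - G.tri y γ (G.tri t α x)) = 0 := by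
    intro x y t α γ
    have key2 : G.tri x α (G.tri y γ t) - G.tri (G.tri y γ t) α x
        = G.tri (G.tri x α y - G.tri y α x) γ t
          + (G.tri y α (G.tri x γ t) - G.tri y γ (G.tri t α x)) := by
      simp only [G.tri_sub_left, G.assoc]
      abel
    have h := hc x (G.tri y γ t) α
    rw [key2, G.add_right, ← G.assoc, hc x y α, G.tri_zero_left, zero_add] at h
    exact h
  -- reassociation helper
  have push : ∀ (n y u v : M) (β α γ : Γ),
      G.tri n β (G.tri y α u - G.tri y γ v)
        = G.tri (G.tri n β y) α u - G.tri (G.tri n β y) γ v := by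
    intro n y u v β α γ
    rw [G.tri_sub_right, G.assoc, G.assoc]
  -- semiprimeness lemma
  have key : ∀ (a b P Q : M) (α β : Γ),
      G.tri a α P = - G.tri b β Q →
      (∀ n : M, G.tri a α (G.tri n β Q) = 0) →
      G.tri a α P = 0 := by
    intro a b P Q α β h1 h2
    apply hsp
    intro δ m ε
    have e1 : G.tri (G.tri (G.tri a α P) δ m) ε (G.tri a α P)
        = G.tri a α (G.tri P δ (G.tri m ε (G.tri a α P))) := by
      simp only [G.assoc]
    rw [e1, h1, G.tri_neg_right, G.tri_neg_right, G.tri_neg_right,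
      ← G.assoc m ε b β Q, ← G.assoc P δ (G.tri m ε b) β Q,
      h2 (G.tri P δ (G.tri m ε b)), neg_zero]
  -- E2: linearization of E1 in x
  have hE2 : ∀ (x z y t : M) (α γ : Γ),
      G.tri (σ x - x) α (G.tri y α (G.tri z γ t) - G.tri y γ (G.tri t α z))
        = - G.tri (σ z - z) α (G.tri y α (G.tri x γ t) - G.tri y γ (G.tri t α x)) := by
    intro x z y t α γ
    have h := hE1 (x + z) y t α γ
    have e3 : G.tri y α (G.tri (x + z) γ t) - G.tri y γ (G.tri t α (x + z))
        = (G.tri y α (G.tri x γ t) - G.tri y γ (G.tri t α x))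
          + (G.tri y α (G.tri z γ t) - G.tri y γ (G.tri t α z)) := by
      simp only [G.add_left, G.add_right]
      abel
    rw [hadd, e3, show σ x + σ z - (x + z) = (σ x - x) + (σ z - z) from by abel,
      G.add_left] at h
    simp only [G.add_right] at h
    rw [hE1 x y t α γ, hE1 z y t α γ, zero_add, add_zero] at h
    exact eq_neg_of_add_eq_zero_left h
  -- E4: (σx - x) α (yα(zγt) - yγ(tαz)) = 0 for all z
  have hE4 : ∀ (x z y t : M) (α γ : Γ),
      G.tri (σ x - x) α (G.tri y α (G.tri z γ t) - G.tri y γ (G.tri t α z)) = 0 := by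
    intro x z y t α γ
    refine key _ _ _ _ α α (hE2 x z y t α γ) ?_
    intro n
    rw [push]
    exact hE1 x (G.tri n α y) t α γ
  -- E5: polarization of E4 in the Γ-variable
  have hE5 : ∀ (x y z t : M) (α β γ : Γ),
      G.tri (σ x - x) α (G.tri y β (G.tri z γ t) - G.tri y γ (G.tri t β z))
        = - G.tri (σ x - x) β (G.tri y α (G.tri z γ t) - G.tri y γ (G.tri t α z)) := by
    intro x y z t α β γ
    have h := hE4 x z y t (α + β) γ
    have e : G.tri y (α + β) (G.tri z γ t) - G.tri y γ (G.tri t (α + β) z)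
        = (G.tri y α (G.tri z γ t) - G.tri y γ (G.tri t α z))
          + (G.tri y β (G.tri z γ t) - G.tri y γ (G.tri t β z)) := by
      simp only [G.add_mid, G.add_right]
      abel
    rw [e, G.add_mid] at h
    simp only [G.add_right] at h
    rw [hE4 x z y t α γ, hE4 x z y t β γ, zero_add, add_zero] at h
    exact eq_neg_of_add_eq_zero_left h
  -- conclusion
  intro x y z t α β γ
  refine key _ _ _ _ α β (hE5 x y z t α β γ) ?_
  intro n
  rw [push]
  exact hE4 x z (G.tri n β y) t α γ
end
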